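/- arXiv:1512.06354 — 5 statements merged into one kernel-verified Lean document; each statement's English description precedes it below -/
import Mathlib

section
/- The norm on the Zorn vector-matrix octonion algebra is multiplicative: n(ab) = n(a)·n(b) for all octonions a, b. -/
open Matrix

/-- The Zorn vector-matrix algebra: elements `(α, u; v, β)` with `α β : F`, `u v : F³`. -/
def Zorn (F : Type*) : Type _ := F × F × (Fin 3 → F) × (Fin 3 → F)

namespace Zorn

variable {F : Type*} [Field F]

/-- Build a Zorn matrix from its four components. -/
def mk (a b : F) (u v : Fin 3 → F) : Zorn F := (a, b, u, v)

/-- The upper-left scalar entry `α`. -/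
def al (x : Zorn F) : F := x.1
/-- The lower-right scalar entry `β`. -/
def be (x : Zorn F) : F := x.2.1
/-- The upper-right vector entry `u`. -/
def up (x : Zorn F) : Fin 3 → F := x.2.2.1
/-- The lower-left vector entry `v`. -/
def lo (x : Zorn F) : Fin 3 → F := x.2.2.2

instance : AddCommGroup (Zorn F) :=
  inferInstanceAs (AddCommGroup (F × F × (Fin 3 → F) × (Fin 3 → F)))

instance : Module F (Zorn F) :=
  inferInstanceAs (Module F (F × F × (Fin 3 → F) × (Fin 3 → F)))

/-- Zorn vector-matrix multiplication. -/
instance : Mul (Zorn F) :=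
  ⟨fun x y => mk (x.al * y.al + x.up ⬝ᵥ y.lo)
      (x.be * y.be + x.lo ⬝ᵥ y.up)
      (x.al • y.up + y.be • x.up - crossProduct x.lo y.lo)
      (y.al • x.lo + x.be • y.lo + crossProduct x.up y.up)⟩

instance : One (Zorn F) := ⟨mk 1 1 0 0⟩

/-- The standard conjugation (involution) of the Zorn algebra. -/
def conj (x : Zorn F) : Zorn F := mk x.be x.al (-x.up) (-x.lo)

/-- The trace `t(a) = α + β` (the scalar such that `a + conj a = t a • 1`). -/
def t (x : Zorn F) : F := x.al + x.be

/-- The norm `n(a) = αβ - u·v` (the scalar such that `a * conj a = n a • 1`). -/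
def n (x : Zorn F) : F := x.al * x.be - x.up ⬝ᵥ x.lo

/-- The idempotent `e₁`. -/
def e₁ : Zorn F := mk 1 0 0 0
/-- The idempotent `e₂`. -/
def e₂ : Zorn F := mk 0 1 0 0
/-- The basis element `u_i`. -/
def U (i : Fin 3) : Zorn F := mk 0 0 (Pi.single i 1) 0
/-- The basis element `v_i`. -/
def V (i : Fin 3) : Zorn F := mk 0 0 0 (Pi.single i 1)

/-- An (algebra) automorphism of the Zorn algebra: a bijective `F`-linear,
multiplicative, unital self-map. -/
def IsAut (g : Zorn F → Zorn F) : Prop :=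
  Function.Bijective g ∧ (∀ x y : Zorn F, g (x + y) = g x + g y) ∧
    (∀ (c : F) (x : Zorn F), g (c • x) = c • g x) ∧
    (∀ x y : Zorn F, g (x * y) = g x * g y) ∧ g 1 = 1

end Zorn

open Zorn

/-- The norm of the Zorn octonion algebra is multiplicative. -/
theorem zorn_norm_mul {F : Type*} [Field F] (a b : Zorn F) :
    Zorn.n (a * b) = Zorn.n a * Zorn.n b := by
  obtain ⟨a1, a2, u, v⟩ := a
  obtain ⟨b1, b2, u', v'⟩ := b
  show Zorn.n (Zorn.mk _ _ _ _) = _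
  simp only [Zorn.n, Zorn.mk, Zorn.al, Zorn.be, Zorn.up, Zorn.lo, crossProduct,
    dotProduct, Fin.sum_univ_three, Pi.add_apply, Pi.sub_apply, Pi.smul_apply,
    smul_eq_mul, LinearMap.mk₂_apply, Matrix.cons_val_zero, Matrix.cons_val_one,
    Matrix.head_cons, Matrix.cons_val_two, Matrix.tail_cons]
  ring
end

section
/- Any algebra automorphism g of the Zorn octonion algebra O commutes with conjugation, and hence preserves the trace, the norm, and the associated bilinear form: t(ga) = t(a), n(ga) = n(a), and q(ga, gb) = q(a, b) for all a, b ∈ O, where q(a,b) = a·conj(b) + b·conj(a). -/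
open Matrix

open Zorn

namespace ZornAux

open Zorn

variable {F : Type*} [Field F]

lemma ext' {x y : Zorn F} (h1 : x.al = y.al) (h2 : x.be = y.be)
    (h3 : x.up = y.up) (h4 : x.lo = y.lo) : x = y := by
  obtain ⟨a, b, u, v⟩ := x
  obtain ⟨a', b', u', v'⟩ := y
  simp only [Zorn.al, Zorn.be, Zorn.up, Zorn.lo] at h1 h2 h3 h4
  simp_all
  rfl

@[simp] lemma al_mul (x y : Zorn F) : (x * y).al = x.al * y.al + x.up ⬝ᵥ y.lo := rfl
@[simp] lemma be_mul (x y : Zorn F) : (x * y).be = x.be * y.be + x.lo ⬝ᵥ y.up := rfl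
@[simp] lemma up_mul (x y : Zorn F) :
    (x * y).up = x.al • y.up + y.be • x.up - crossProduct x.lo y.lo := rfl
@[simp] lemma lo_mul (x y : Zorn F) :
    (x * y).lo = y.al • x.lo + x.be • y.lo + crossProduct x.up y.up := rfl

@[simp] lemma al_add (x y : Zorn F) : (x + y).al = x.al + y.al := rfl
@[simp] lemma be_add (x y : Zorn F) : (x + y).be = x.be + y.be := rfl
@[simp] lemma up_add (x y : Zorn F) : (x + y).up = x.up + y.up := rfl
@[simp] lemma lo_add (x y : Zorn F) : (x + y).lo = x.lo + y.lo := rfl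

@[simp] lemma al_sub (x y : Zorn F) : (x - y).al = x.al - y.al := rfl
@[simp] lemma be_sub (x y : Zorn F) : (x - y).be = x.be - y.be := rfl
@[simp] lemma up_sub (x y : Zorn F) : (x - y).up = x.up - y.up := rfl
@[simp] lemma lo_sub (x y : Zorn F) : (x - y).lo = x.lo - y.lo := rfl

@[simp] lemma al_smul (c : F) (x : Zorn F) : (c • x).al = c * x.al := rfl
@[simp] lemma be_smul (c : F) (x : Zorn F) : (c • x).be = c * x.be := rfl
@[simp] lemma up_smul (c : F) (x : Zorn F) : (c • x).up = c • x.up := rfl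
@[simp] lemma lo_smul (c : F) (x : Zorn F) : (c • x).lo = c • x.lo := rfl

@[simp] lemma al_one : (1 : Zorn F).al = 1 := rfl
@[simp] lemma be_one : (1 : Zorn F).be = 1 := rfl
@[simp] lemma up_one : (1 : Zorn F).up = 0 := rfl
@[simp] lemma lo_one : (1 : Zorn F).lo = 0 := rfl

@[simp] lemma al_conj (x : Zorn F) : (Zorn.conj x).al = x.be := rfl
@[simp] lemma be_conj (x : Zorn F) : (Zorn.conj x).be = x.al := rfl
@[simp] lemma up_conj (x : Zorn F) : (Zorn.conj x).up = -x.up := rfl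
@[simp] lemma lo_conj (x : Zorn F) : (Zorn.conj x).lo = -x.lo := rfl

lemma smul_one_inj {c d : F} (h : c • (1 : Zorn F) = d • (1 : Zorn F)) : c = d := by
  have := congrArg Zorn.al h
  simpa using this

lemma conj_eq (x : Zorn F) : Zorn.conj x = Zorn.t x • (1 : Zorn F) - x := by
  apply ext' <;> simp [Zorn.t] <;> abel

lemma sq_eq (x : Zorn F) : x * x = Zorn.t x • x - Zorn.n x • (1 : Zorn F) := by
  apply ext' <;>
    simp [Zorn.t, Zorn.n, cross_self, dotProduct_comm x.lo x.up, add_smul, smul_smul] <;>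
    first | ring | module

lemma mul_add' (x y z : Zorn F) : x * (y + z) = x * y + x * z := by
  apply ext' <;> simp [dotProduct_add, smul_add, map_add, add_smul] <;> first | ring | abel | module

lemma add_mul' (x y z : Zorn F) : (x + y) * z = x * z + y * z := by
  apply ext' <;> simp [add_dotProduct, add_smul, map_add, LinearMap.add_apply] <;>
    first | ring | abel | module

lemma conj_add (x y : Zorn F) : Zorn.conj (x + y) = Zorn.conj x + Zorn.conj y := by
  apply ext' <;> simp <;> abel

lemma mul_conj_self (x : Zorn F) : x * Zorn.conj x = Zorn.n x • (1 : Zorn F) := by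
  apply ext' <;> simp [Zorn.n, dotProduct_neg, dotProduct_comm x.lo x.up, map_neg, cross_self] <;>
    first | ring | module

lemma polarization (x y : Zorn F) :
    x * Zorn.conj y + y * Zorn.conj x
      = (Zorn.n (x + y) - Zorn.n x - Zorn.n y) • (1 : Zorn F) := by
  have h := mul_conj_self (x + y)
  rw [conj_add, mul_add', add_mul', add_mul', mul_conj_self x, mul_conj_self y] at h
  have : x * Zorn.conj y + y * Zorn.conj x
      = Zorn.n (x + y) • (1 : Zorn F) - Zorn.n x • (1 : Zorn F) - Zorn.n y • (1 : Zorn F) := by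
    rw [← h]; abel
  rw [this, sub_smul, sub_smul]

end ZornAux

open ZornAux in
/-- Every algebra automorphism of the Zorn octonion algebra commutes with
conjugation, hence preserves the trace, the norm and the bilinear form
`q(a,b) = a·conj(b) + b·conj(a)`. -/
theorem zorn_aut_preserves_forms {F : Type*} [Field F]
    (g : Zorn F → Zorn F) (hg : Zorn.IsAut g) :
    (∀ a : Zorn F, g (Zorn.conj a) = Zorn.conj (g a)) ∧
    (∀ a : Zorn F, Zorn.t (g a) = Zorn.t a) ∧
    (∀ a : Zorn F, Zorn.n (g a) = Zorn.n a) ∧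
    (∀ a b : Zorn F,
      g a * Zorn.conj (g b) + g b * Zorn.conj (g a)
        = a * Zorn.conj b + b * Zorn.conj a) := by
  obtain ⟨hbij, hadd, hsmul, hmul, hone⟩ := hg
  have hscal : ∀ c : F, g (c • (1 : Zorn F)) = c • (1 : Zorn F) := fun c => by
    rw [hsmul, hone]
  have hneg : ∀ x : Zorn F, g (-x) = -g x := fun x => by
    have := hsmul (-1) x
    simpa [neg_one_smul] using this
  have hsub : ∀ x y : Zorn F, g (x - y) = g x - g y := fun x y => by
    rw [sub_eq_add_neg, hadd, hneg, sub_eq_add_neg]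
  -- the key quadratic relation
  have key : ∀ a : Zorn F,
      (Zorn.t a - Zorn.t (g a)) • g a
        = (Zorn.n a - Zorn.n (g a)) • (1 : Zorn F) := by
    intro a
    have h1 : g a * g a = Zorn.t a • g a - Zorn.n a • (1 : Zorn F) := by
      rw [← hmul, sq_eq a, hsub, hsmul, hsmul, hone]
    have h2 : g a * g a = Zorn.t (g a) • g a - Zorn.n (g a) • (1 : Zorn F) := sq_eq _
    have h3 := h1.symm.trans h2
    rw [sub_eq_sub_iff_sub_eq_sub] at h3
    rw [sub_smul, sub_smul]
    exact h3
  have trace_eq : ∀ a : Zorn F, Zorn.t (g a) = Zorn.t a := by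
    intro a
    by_cases hc : ∃ c : F, a = c • (1 : Zorn F)
    · obtain ⟨c, rfl⟩ := hc
      rw [hscal]
    · by_contra hne
      have hd : Zorn.t a - Zorn.t (g a) ≠ 0 := sub_ne_zero.mpr fun h => hne h.symm
      have hga : g a
          = ((Zorn.t a - Zorn.t (g a))⁻¹ * (Zorn.n a - Zorn.n (g a))) • (1 : Zorn F) := by
        calc g a = (Zorn.t a - Zorn.t (g a))⁻¹ • ((Zorn.t a - Zorn.t (g a)) • g a) := by
              rw [smul_smul, inv_mul_cancel₀ hd, one_smul]
          _ = _ := by rw [key a, smul_smul]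
      exact hc ⟨_, hbij.1 (by rw [hga, hscal])⟩
  have norm_eq : ∀ a : Zorn F, Zorn.n (g a) = Zorn.n a := by
    intro a
    have h := key a
    rw [trace_eq a, sub_self, zero_smul] at h
    have h2 : (Zorn.n a - Zorn.n (g a)) • (1 : Zorn F) = (0 : F) • (1 : Zorn F) := by
      rw [zero_smul, ← h]
    exact (sub_eq_zero.mp (smul_one_inj h2)).symm
  have conj_comm : ∀ a : Zorn F, g (Zorn.conj a) = Zorn.conj (g a) := by
    intro a
    rw [conj_eq a, hsub, hscal, conj_eq (g a), trace_eq a]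
  refine ⟨conj_comm, trace_eq, norm_eq, fun a b => ?_⟩
  have : g a * Zorn.conj (g b) + g b * Zorn.conj (g a)
      = g (a * Zorn.conj b + b * Zorn.conj a) := by
    rw [hadd, hmul, hmul, conj_comm, conj_comm]
  rw [this, polarization a b, hscal, ← polarization]
end

section
/- Every element g of SL₃(F) induces an algebra automorphism of the Zorn octonion algebra via e₁ ↦ e₁, e₂ ↦ e₂, u ↦ u·g (matrix action on the upper-right vector), v ↦ v·(g⁻¹)ᵀ (on the lower-left vector). -/
open Matrix

open Zorn


section AuxZorn

variable {F : Type*} [Field F]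

lemma cross_vecMul_aux (A : Matrix (Fin 3) (Fin 3) F) (u v : Fin 3 → F) :
    crossProduct (u ᵥ* A) (v ᵥ* A) = (crossProduct u v) ᵥ* (A.adjugate)ᵀ := by
  funext i
  fin_cases i <;>
    simp [cross_apply, Matrix.vecMul, dotProduct, Matrix.adjugate_fin_three,
      Fin.sum_univ_three] <;> ring

lemma dot_vecMul_aux (A B : Matrix (Fin 3) (Fin 3) F) (hAB : A * B = 1) (u v : Fin 3 → F) :
    (u ᵥ* A) ⬝ᵥ (v ᵥ* Bᵀ) = u ⬝ᵥ v := by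
  rw [Matrix.vecMul_transpose, Matrix.dotProduct_mulVec, Matrix.vecMul_vecMul, hAB,
    Matrix.vecMul_one]

lemma zorn_ext {x y : Zorn F} (h1 : x.al = y.al) (h2 : x.be = y.be)
    (h3 : x.up = y.up) (h4 : x.lo = y.lo) : x = y := by
  obtain ⟨a, b, u, v⟩ := x
  obtain ⟨a', b', u', v'⟩ := y
  simp only [al, be, up, lo] at h1 h2 h3 h4
  subst h1; subst h2; subst h3; subst h4; rfl

@[simp] lemma al_mk (a b : F) (u v : Fin 3 → F) : (Zorn.mk a b u v).al = a := rfl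
@[simp] lemma be_mk (a b : F) (u v : Fin 3 → F) : (Zorn.mk a b u v).be = b := rfl
@[simp] lemma up_mk (a b : F) (u v : Fin 3 → F) : (Zorn.mk a b u v).up = u := rfl
@[simp] lemma lo_mk (a b : F) (u v : Fin 3 → F) : (Zorn.mk a b u v).lo = v := rfl

@[simp] lemma al_add (x y : Zorn F) : (x + y).al = x.al + y.al := rfl
@[simp] lemma be_add (x y : Zorn F) : (x + y).be = x.be + y.be := rfl
@[simp] lemma up_add (x y : Zorn F) : (x + y).up = x.up + y.up := rfl
@[simp] lemma lo_add (x y : Zorn F) : (x + y).lo = x.lo + y.lo := rfl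

@[simp] lemma al_smul (c : F) (x : Zorn F) : (c • x).al = c * x.al := rfl
@[simp] lemma be_smul (c : F) (x : Zorn F) : (c • x).be = c * x.be := rfl
@[simp] lemma up_smul (c : F) (x : Zorn F) : (c • x).up = c • x.up := rfl
@[simp] lemma lo_smul (c : F) (x : Zorn F) : (c • x).lo = c • x.lo := rfl

lemma al_mul (x y : Zorn F) : (x * y).al = x.al * y.al + x.up ⬝ᵥ y.lo := rfl
lemma be_mul (x y : Zorn F) : (x * y).be = x.be * y.be + x.lo ⬝ᵥ y.up := rfl
lemma up_mul (x y : Zorn F) :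
    (x * y).up = x.al • y.up + y.be • x.up - crossProduct x.lo y.lo := rfl
lemma lo_mul (x y : Zorn F) :
    (x * y).lo = y.al • x.lo + x.be • y.lo + crossProduct x.up y.up := rfl

@[simp] lemma al_one : (1 : Zorn F).al = 1 := rfl
@[simp] lemma be_one : (1 : Zorn F).be = 1 := rfl
@[simp] lemma up_one : (1 : Zorn F).up = 0 := rfl
@[simp] lemma lo_one : (1 : Zorn F).lo = 0 := rfl

end AuxZorn

/-- Every `g ∈ SL₃(F)` induces an automorphism of the Zorn octonion algebra via
`e₁ ↦ e₁`, `e₂ ↦ e₂`, `u ↦ u·g`, `v ↦ v·(g⁻¹)ᵀ`. -/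
theorem zorn_sl3_aut {F : Type*} [Field F]
    (g : Matrix (Fin 3) (Fin 3) F) (hg : g.det = 1) :
    Zorn.IsAut (fun x : Zorn F => Zorn.mk x.al x.be (x.up ᵥ* g) (x.lo ᵥ* g⁻¹ᵀ)) := by
  have hinv : g⁻¹ = g.adjugate := by rw [Matrix.inv_def, hg]; simp
  have hgB : g * g.adjugate = 1 := by rw [Matrix.mul_adjugate, hg, one_smul]
  have hBg : g.adjugate * g = 1 := by rw [Matrix.adjugate_mul, hg, one_smul]
  have hBB : (((g.adjugate)ᵀ).adjugate)ᵀ = g := by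
    rw [← Matrix.adjugate_transpose, Matrix.transpose_transpose,
      Matrix.adjugate_adjugate _ (by simp), hg, one_pow, one_smul]
  have hd1 : ∀ u v : Fin 3 → F, (u ᵥ* g) ⬝ᵥ (v ᵥ* (g.adjugate)ᵀ) = u ⬝ᵥ v :=
    dot_vecMul_aux g g.adjugate hgB
  have hcu : ∀ u v : Fin 3 → F,
      crossProduct (u ᵥ* g) (v ᵥ* g) = (crossProduct u v) ᵥ* (g.adjugate)ᵀ :=
    cross_vecMul_aux g
  have hcv : ∀ u v : Fin 3 → F,
      crossProduct (u ᵥ* (g.adjugate)ᵀ) (v ᵥ* (g.adjugate)ᵀ) = (crossProduct u v) ᵥ* g := by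
    intro u v; rw [cross_vecMul_aux, hBB]
  simp only [hinv]
  refine ⟨?_, ?_, ?_, ?_, ?_⟩
  · refine Function.bijective_iff_has_inverse.mpr
      ⟨fun x => Zorn.mk x.al x.be (x.up ᵥ* g.adjugate) (x.lo ᵥ* gᵀ), fun x => ?_, fun x => ?_⟩
    · refine zorn_ext ?_ ?_ ?_ ?_ <;>
        simp [Matrix.vecMul_vecMul, ← Matrix.transpose_mul, hgB, hBg]
    · refine zorn_ext ?_ ?_ ?_ ?_ <;>
        simp [Matrix.vecMul_vecMul, ← Matrix.transpose_mul, hgB, hBg]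
  · intro x y
    refine zorn_ext ?_ ?_ ?_ ?_ <;> simp [Matrix.add_vecMul]
  · intro c x
    refine zorn_ext ?_ ?_ ?_ ?_ <;> simp [Matrix.smul_vecMul]
  · intro x y
    refine zorn_ext ?_ ?_ ?_ ?_ <;>
      simp only [al_mul, be_mul, up_mul, lo_mul, al_mk, be_mk, up_mk, lo_mk]
    · rw [hd1]
    · rw [dotProduct_comm (x.lo ᵥ* g.adjugateᵀ), hd1, dotProduct_comm]
    · rw [Matrix.sub_vecMul, Matrix.add_vecMul, Matrix.smul_vecMul, Matrix.smul_vecMul, hcv]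
    · rw [Matrix.add_vecMul, Matrix.add_vecMul, Matrix.smul_vecMul, Matrix.smul_vecMul, hcu]
  · refine zorn_ext ?_ ?_ ?_ ?_ <;> simp
end

section
/- Let F be a field with char F ≠ 3, or more generally suppose z ∈ O has norm 1 and trace t(z) such that the polynomial t³ − 3t − t(z) has a root t₁ ∈ F with t₁² ≠ 1. Then there exists an octonion x with n(x) = 1 and x³ = z; explicitly, if z = αe₁ + βe₂ + u + v then x = ((α+t₁)/(t₁²−1))e₁ + ((β+t₁)/(t₁²−1))e₂ + u/(t₁²−1) + v/(t₁²−1) satisfies t(x) = t₁, n(x) = 1, and x³ = z. -/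
open Matrix

open Zorn

lemma zorn_mul_def {F : Type*} [Field F] (x y : Zorn F) :
    x * y = Zorn.mk (x.al * y.al + x.up ⬝ᵥ y.lo) (x.be * y.be + x.lo ⬝ᵥ y.up)
      (x.al • y.up + y.be • x.up - crossProduct x.lo y.lo)
      (y.al • x.lo + x.be • y.lo + crossProduct x.up y.up) := rfl

lemma zorn_smul_def {F : Type*} [Field F] (c : F) (x : Zorn F) :
    c • x = Zorn.mk (c * x.al) (c * x.be) (c • x.up) (c • x.lo) := rfl

lemma zorn_sub_def {F : Type*} [Field F] (x y : Zorn F) :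
    x - y = Zorn.mk (x.al - y.al) (x.be - y.be) (x.up - y.up) (x.lo - y.lo) := rfl

lemma zorn_one_def {F : Type*} [Field F] : (1 : Zorn F) = Zorn.mk 1 1 0 0 := rfl

lemma zorn_cube_id {F : Type*} [Field F] (x : Zorn F) :
    x * (x * x) = (Zorn.t x ^ 2 - Zorn.n x) • x - (Zorn.t x * Zorn.n x) • (1 : Zorn F) := by
  rw [zorn_mul_def, zorn_mul_def, zorn_sub_def, zorn_smul_def, zorn_smul_def, zorn_one_def]
  obtain ⟨a, b, u, v⟩ := x
  simp only [zorn_mul_def, zorn_smul_def, zorn_sub_def, zorn_one_def,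
    Zorn.mk, Zorn.al, Zorn.be, Zorn.up, Zorn.lo, Zorn.t, Zorn.n, Prod.mk.injEq]
  refine Prod.ext ?_ (Prod.ext ?_ (Prod.ext ?_ ?_))
  · simp [dotProduct, Fin.sum_univ_three, cross_apply]; ring
  · simp [dotProduct, Fin.sum_univ_three, cross_apply]; ring
  · funext i
    fin_cases i <;>
      simp [dotProduct, Fin.sum_univ_three, cross_apply, Pi.smul_apply, smul_eq_mul] <;> ring
  · funext i
    fin_cases i <;>
      simp [dotProduct, Fin.sum_univ_three, cross_apply, Pi.smul_apply, smul_eq_mul] <;> ring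

/-- If `z` has norm one and `t₁` is a root of `t³ − 3t − t(z)` with `t₁² ≠ 1`,
then the explicitly given octonion `x` satisfies `t(x) = t₁`, `n(x) = 1` and
`x³ = z`. -/
theorem zorn_cube_root {F : Type*} [Field F] (z : Zorn F) (hz : Zorn.n z = 1)
    (t₁ : F) (hroot : t₁ ^ 3 - 3 * t₁ - Zorn.t z = 0) (ht₁ : t₁ ^ 2 ≠ 1) :
    let x : Zorn F := Zorn.mk ((z.al + t₁) / (t₁ ^ 2 - 1)) ((z.be + t₁) / (t₁ ^ 2 - 1))
      ((t₁ ^ 2 - 1)⁻¹ • z.up) ((t₁ ^ 2 - 1)⁻¹ • z.lo)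
    Zorn.t x = t₁ ∧ Zorn.n x = 1 ∧ x * (x * x) = z := by
  intro x
  have hd : t₁ ^ 2 - 1 ≠ 0 := sub_ne_zero.mpr ht₁
  have htr : z.al + z.be = t₁ ^ 3 - 3 * t₁ := by
    have := hroot; unfold Zorn.t at this; linear_combination -this
  have hnz : z.al * z.be - z.up ⬝ᵥ z.lo = 1 := hz
  rw [dotProduct, Fin.sum_univ_three] at hnz
  have ht : Zorn.t x = t₁ := by
    show (z.al + t₁) / (t₁ ^ 2 - 1) + (z.be + t₁) / (t₁ ^ 2 - 1) = t₁
    field_simp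
    linear_combination htr
  have hn : Zorn.n x = 1 := by
    show (z.al + t₁) / (t₁ ^ 2 - 1) * ((z.be + t₁) / (t₁ ^ 2 - 1)) -
      ((t₁ ^ 2 - 1)⁻¹ • z.up) ⬝ᵥ ((t₁ ^ 2 - 1)⁻¹ • z.lo) = 1
    rw [smul_dotProduct, dotProduct_smul, smul_eq_mul, smul_eq_mul]
    field_simp
    simp only [dotProduct, Fin.sum_univ_three]
    linear_combination hnz + t₁ * htr
  refine ⟨ht, hn, ?_⟩
  rw [zorn_cube_id, ht, hn]
  obtain ⟨a, b, u, v⟩ := z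
  simp only [zorn_smul_def, zorn_sub_def, zorn_one_def, Zorn.mk, Zorn.al, Zorn.be,
    Zorn.up, Zorn.lo, x] at *
  refine Prod.ext ?_ (Prod.ext ?_ (Prod.ext ?_ ?_))
  · show (t₁ ^ 2 - 1) * ((a + t₁) / (t₁ ^ 2 - 1)) - t₁ * 1 * 1 = a
    field_simp
    ring
  · show (t₁ ^ 2 - 1) * ((b + t₁) / (t₁ ^ 2 - 1)) - t₁ * 1 * 1 = b
    field_simp
    ring
  · show (t₁ ^ 2 - 1) • (t₁ ^ 2 - 1)⁻¹ • u - (t₁ * 1) • (0 : Fin 3 → F) = u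
    rw [smul_smul, mul_inv_cancel₀ hd, one_smul, smul_zero, sub_zero]
  · show (t₁ ^ 2 - 1) • (t₁ ^ 2 - 1)⁻¹ • v - (t₁ * 1) • (0 : Fin 3 → F) = v
    rw [smul_smul, mul_inv_cancel₀ hd, one_smul, smul_zero, sub_zero]
end

section
/- Let char F ≠ 2. For indices i ≠ j in {1,2,3} and k the remaining index, the evaluation Q(u₁, u₂, v_i, v_j) equals (1/6)(2(−1)^{ε_{ji}}δ_{k3} + δ_{i2}δ_{j1} − δ_{i1}δ_{j2}); in particular Q(u₁, u₂, v₁, v₂) = ±1/2 and Q(u₁, u₂, v_i, v_j) = 0 if {i,j} ≠ {1,2}. -/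
open Matrix

open Zorn

/-- `M(z₁,z₂) = ½(z₁z₂ − z₂z₁) + t(z₁)z₂ − t(z₂)z₁`. -/
def M {F : Type*} [Field F] (z₁ z₂ : Zorn F) : Zorn F :=
  (2 : F)⁻¹ • (z₁ * z₂ - z₂ * z₁) + Zorn.t z₁ • z₂ - Zorn.t z₂ • z₁

/-- `F(z₁,z₂,z₃,z₄) = t(M(z₁,z₂)·M(z₃,z₄))`. -/
def Fq {F : Type*} [Field F] (z₁ z₂ z₃ z₄ : Zorn F) : F :=
  Zorn.t (M z₁ z₂ * M z₃ z₄)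

/-- `Q`, the complete skew symmetrization of `F(z₁,z₂,z₃,z₄)`. -/
def Q {F : Type*} [Field F] (z₁ z₂ z₃ z₄ : Zorn F) : F :=
  (6 : F)⁻¹ * (Fq z₁ z₂ z₃ z₄ - Fq z₃ z₂ z₁ z₄ - Fq z₄ z₂ z₃ z₁ - Fq z₁ z₄ z₃ z₂
    - Fq z₁ z₃ z₂ z₄ - Fq z₃ z₄ z₂ z₁)


namespace Zorn
variable {F : Type*} [Field F]

theorem mk_mul_mk (a b a' b' : F) (u v u' v' : Fin 3 → F) :
    (mk a b u v) * (mk a' b' u' v') =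
      mk (a * a' + u ⬝ᵥ v') (b * b' + v ⬝ᵥ u')
        (a • u' + b' • u - crossProduct v v')
        (a' • v + b • v' + crossProduct u u') := rfl

theorem mk_add_mk (a b a' b' : F) (u v u' v' : Fin 3 → F) :
    (mk a b u v) + (mk a' b' u' v') = mk (a + a') (b + b') (u + u') (v + v') := rfl

theorem mk_sub_mk (a b a' b' : F) (u v u' v' : Fin 3 → F) :
    (mk a b u v) - (mk a' b' u' v') = mk (a - a') (b - b') (u - u') (v - v') := rfl

theorem smul_mk (c a b : F) (u v : Fin 3 → F) :
    c • (mk a b u v) = mk (c * a) (c * b) (c • u) (c • v) := rfl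

theorem t_mk (a b : F) (u v : Fin 3 → F) : Zorn.t (mk a b u v) = a + b := rfl

theorem U_def (i : Fin 3) : (U i : Zorn F) = mk 0 0 (Pi.single i 1) 0 := rfl
theorem V_def (i : Fin 3) : (V i : Zorn F) = mk 0 0 0 (Pi.single i 1) := rfl

end Zorn

set_option maxHeartbeats 1000000 in
theorem Qval {F : Type*} [Field F] (h2 : (2 : F) ≠ 0) (i j : Fin 3) :
    Q (U 0 : Zorn F) (U 1) (V i) (V j) =
      (6:F)⁻¹ * (if i = 0 ∧ j = 1 then -3 else if i = 1 ∧ j = 0 then 3 else 0) := by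
  fin_cases i <;> fin_cases j <;>
    · unfold Q
      norm_num only
      congr 1
      simp only [Fq, M, U_def, V_def, t_mk, mk_mul_mk, mk_add_mk, mk_sub_mk, smul_mk]
      simp only [crossProduct, LinearMap.mk₂_apply]
      simp [Pi.single_apply, dotProduct, Fin.sum_univ_three]
      try field_simp
      try ring

theorem sign_aux1 (σ : Equiv.Perm (Fin 3)) (h0 : σ 0 = 2) (h1 : σ 1 = 1) (h2 : σ 2 = 0) :
    (Equiv.Perm.sign σ : ℤ) = -1 := by
  have hs : σ = Equiv.swap 0 2 := by
    apply Equiv.ext; intro x; fin_cases x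
    · exact h0.trans (by decide)
    · exact h1.trans (by decide)
    · exact h2.trans (by decide)
  rw [hs]; decide

theorem sign_aux2 (σ : Equiv.Perm (Fin 3)) (h0 : σ 0 = 2) (h1 : σ 1 = 0) (h2 : σ 2 = 1) :
    (Equiv.Perm.sign σ : ℤ) = 1 := by
  have hs : σ = Equiv.swap 0 1 * Equiv.swap 0 2 := by
    apply Equiv.ext; intro x; fin_cases x
    · exact h0.trans (by decide)
    · exact h1.trans (by decide)
    · exact h2.trans (by decide)
  rw [hs]; decide

/-- The values `Q(u₁, u₂, v_i, v_j)` for `i ≠ j`. (Indices are 0-based: `U 0`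
is `u₁` etc., and `ε_{ji}` is realized by a permutation `σ` sending `(0,1,2)` to
`(k,j,i)`.) -/
theorem zorn_Q_uuvv {F : Type*} [Field F] (h2 : (2 : F) ≠ 0) (h3 : (3 : F) ≠ 0)
    (i j k : Fin 3) (hij : i ≠ j) (hki : k ≠ i) (hkj : k ≠ j)
    (σ : Equiv.Perm (Fin 3)) (hσ0 : σ 0 = k) (hσ1 : σ 1 = j) (hσ2 : σ 2 = i) :
    Q (U 0 : Zorn F) (U 1) (V i) (V j) =
      (1 / 6 : F) * (2 * ((Equiv.Perm.sign σ : ℤ) : F) * (if k = 2 then 1 else 0)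
        + (if i = 1 then 1 else 0) * (if j = 0 then 1 else 0)
        - (if i = 0 then 1 else 0) * (if j = 1 then 1 else 0)) ∧
    (Q (U 0 : Zorn F) (U 1) (V 0) (V 1) = (1 / 2 : F) ∨
      Q (U 0 : Zorn F) (U 1) (V 0) (V 1) = -(1 / 2 : F)) ∧
    (({i, j} : Finset (Fin 3)) ≠ {0, 1} → Q (U 0 : Zorn F) (U 1) (V i) (V j) = 0) := by
  have h6 : (6 : F) ≠ 0 := by
    have : (6 : F) = 2 * 3 := by norm_num
    rw [this]; exact mul_ne_zero h2 h3
  have htri : ∀ x : Fin 3, x = 0 ∨ x = 1 ∨ x = 2 := by decide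
  refine ⟨?_, ?_, ?_⟩
  · rcases htri i with rfl | rfl | rfl <;> rcases htri j with rfl | rfl | rfl <;>
      rcases htri k with rfl | rfl | rfl <;>
      first
      | exact absurd rfl hij
      | exact absurd rfl hki
      | exact absurd rfl hkj
      | (rw [Qval h2]; norm_num [Fin.ext_iff]; done)
      | (have hsgn : (Equiv.Perm.sign σ : ℤ) = -1 := sign_aux1 σ hσ0 hσ1 hσ2
         rw [Qval h2, hsgn]
         norm_num [Fin.ext_iff]
         try field_simp
         try ring
         done)
      | (have hsgn : (Equiv.Perm.sign σ : ℤ) = 1 := sign_aux2 σ hσ0 hσ1 hσ2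
         rw [Qval h2, hsgn]
         norm_num [Fin.ext_iff]
         try field_simp
         try ring
         done)
  · right
    rw [Qval h2]
    norm_num
    try field_simp
    try ring
  · intro h
    rcases htri i with rfl | rfl | rfl <;> rcases htri j with rfl | rfl | rfl <;>
      first
      | exact absurd rfl hij
      | exact absurd (by decide) h
      | (rw [Qval h2]; norm_num [Fin.ext_iff]; done)
end
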